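/- (Perlis) Let F ⊆ K be finite fields with q = |F| and n = [K : F], let η ∈ K be a normal element of K over F, let c₀, c₁, …, c_{n−1} ∈ F, and set γ = c₀η + c₁η^q + ⋯ + c_{n−1}η^{q^{n−1}}. Then γ is a normal element of K over F if and only if the polynomials c(x) = c₀ + c₁x + ⋯ + c_{n−1}x^{n−1} and xⁿ − 1 are coprime in F[x]. -/

import Mathlib

open Polynomial

/-- (Perlis) Let `η` be a normal element of `K` over `F` and
`γ = c₀η + c₁η^q + ⋯ + c_{n−1}η^{q^{n−1}}` with `c_i ∈ F`. Then `γ` is normal over `F`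
iff `c(x) = c₀ + c₁x + ⋯ + c_{n−1}x^{n−1}` and `xⁿ − 1` are coprime in `F[x]`. -/
theorem stmt12 (F K : Type*) [Field F] [Fintype F] [Field K] [Fintype K] [Algebra F K]
    (n : ℕ) (hn : Module.finrank F K = n) (η : K)
    (hη : LinearIndependent F (fun i : Fin n => η ^ Fintype.card F ^ (i : ℕ)) ∧
      Submodule.span F (Set.range fun i : Fin n => η ^ Fintype.card F ^ (i : ℕ)) = ⊤)
    (c : Fin n → F) (γ : K)
    (hγ : γ = ∑ i : Fin n, c i • η ^ Fintype.card F ^ (i : ℕ)) :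
    (LinearIndependent F (fun i : Fin n => γ ^ Fintype.card F ^ (i : ℕ)) ∧
        Submodule.span F (Set.range fun i : Fin n => γ ^ Fintype.card F ^ (i : ℕ)) = ⊤) ↔
      IsCoprime (∑ i : Fin n, C (c i) * X ^ (i : ℕ)) ((X : Polynomial F) ^ n - 1) := by
  classical
  have hFD : FiniteDimensional F K := Module.Finite.of_finite
  have hn0 : 0 < n := hn ▸ Module.finrank_pos
  set q := Fintype.card F with hq
  -- characteristic
  set p := ringChar F with hpdef
  have hpF : CharP F p := ringChar.charP F
  have hp : p.Prime := CharP.char_is_prime F p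
  have hKp : CharP K p := charP_of_injective_algebraMap (algebraMap F K).injective p
  have : Fact p.Prime := ⟨hp⟩
  obtain ⟨k, -, hcard⟩ := FiniteField.card F p
  -- the Frobenius as an F-linear endomorphism of K
  have hadd : ∀ x y : K, (x + y) ^ q = x ^ q + y ^ q := by
    intro x y; rw [hq, hcard]; exact add_pow_char_pow x y p k
  let φ : K →ₗ[F] K :=
    { toFun := fun x => x ^ q
      map_add' := hadd
      map_smul' := by
        intro a x
        simp only [Algebra.smul_def, mul_pow, RingHom.id_apply, ← map_pow]
        rw [hq, FiniteField.pow_card] }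
  have hφ : ∀ x : K, φ x = x ^ q := fun _ => rfl
  have hφpow : ∀ (i : ℕ) (x : K), (φ ^ i) x = x ^ q ^ i := by
    intro i
    induction i with
    | zero => intro x; simp
    | succ i ih =>
      intro x
      rw [pow_succ, Module.End.mul_apply, hφ, ih, ← pow_mul, pow_succ, mul_comm]
  have hφn : ∀ x : K, (φ ^ n) x = x := by
    intro x
    rw [hφpow, hq, ← hn, ← Module.card_eq_pow_finrank (K := F) (V := K), FiniteField.pow_card]
  -- the evaluation map
  let e : Polynomial F →ₗ[F] K :=
    { toFun := fun f => aeval φ f η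
      map_add' := by intro f g; simp [LinearMap.add_apply]
      map_smul' := by intro a f; simp [LinearMap.smul_apply] }
  have he : ∀ f : Polynomial F, e f = aeval φ f η := fun _ => rfl
  have h1 : ∀ i : ℕ, e (X ^ i) = η ^ q ^ i := by
    intro i; rw [he, aeval_X_pow]; exact hφpow i η
  set cp : Polynomial F := ∑ i : Fin n, C (c i) * X ^ (i : ℕ) with hcp
  have h2 : e cp = γ := by
    rw [hcp, map_sum, hγ]
    refine Finset.sum_congr rfl fun i _ => ?_
    rw [he, map_mul, aeval_C, aeval_X_pow]
    simp only [Module.End.mul_apply, Module.algebraMap_end_apply]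
    rw [show ((φ ^ (i : ℕ)) η) = η ^ q ^ (i : ℕ) from hφpow _ _]
  have h3 : ∀ (j : ℕ) (f : Polynomial F), e (X ^ j * f) = (e f) ^ q ^ j := by
    intro j f
    rw [he, map_mul, aeval_X_pow, Module.End.mul_apply, ← he, ← hφpow]
  have haevXn : (aeval φ) ((X : Polynomial F) ^ n - 1) = 0 := by
    ext x
    simp only [map_sub, aeval_X_pow, map_one, LinearMap.sub_apply, Module.End.one_apply,
      LinearMap.zero_apply]
    rw [hφn]; ring
  have h4 : ∀ f : Polynomial F, e (((X : Polynomial F) ^ n - 1) * f) = 0 := by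
    intro f
    rw [he, map_mul, haevXn, zero_mul, LinearMap.zero_apply]
  -- kernel of e
  have hker : ∀ f : Polynomial F, e f = 0 → ((X : Polynomial F) ^ n - 1) ∣ f := by
    intro f hf
    have hmonic : ((X : Polynomial F) ^ n - 1).Monic := by
      simpa using monic_X_pow_sub_C (1 : F) hn0.ne'
    set r := f %ₘ ((X : Polynomial F) ^ n - 1) with hr
    have hfr : r + ((X : Polynomial F) ^ n - 1) * (f /ₘ ((X : Polynomial F) ^ n - 1)) = f :=
      modByMonic_add_div f _
    have hdeg : r.degree < ((X : Polynomial F) ^ n - 1).degree :=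
      degree_modByMonic_lt f hmonic
    have hdegXn : ((X : Polynomial F) ^ n - 1).degree = n := by
      simpa using degree_X_pow_sub_C hn0 (1 : F)
    have hdegr : r.natDegree < n := by
      rcases eq_or_ne r 0 with h0 | h0
      · simpa [h0] using hn0
      · have := hdeg
        rw [hdegXn, degree_eq_natDegree h0] at this
        exact_mod_cast this
    have her : e r = 0 := by
      have h' : e r + e (((X : Polynomial F) ^ n - 1) * (f /ₘ ((X : Polynomial F) ^ n - 1)))
          = e f := by rw [← map_add, hfr]
      rw [h4, add_zero] at h'
      rw [h', hf]
    have hsum : ∑ i : Fin n, r.coeff (i : ℕ) • η ^ q ^ (i : ℕ) = 0 := by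
      have := her
      rw [he, aeval_eq_sum_range' hdegr] at this
      rw [← this]
      rw [Fin.sum_univ_eq_sum_range (fun i => r.coeff i • η ^ q ^ i) n]
      rw [LinearMap.sum_apply]
      refine Finset.sum_congr rfl fun i _ => ?_
      rw [LinearMap.smul_apply, hφpow]
    have hcoeff := Fintype.linearIndependent_iff.mp hη.1 (fun i => r.coeff (i : ℕ)) hsum
    have hr0 : r = 0 := by
      ext i
      rcases lt_or_ge i n with h | h
      · simpa using hcoeff ⟨i, h⟩
      · simp [Polynomial.coeff_eq_zero_of_natDegree_lt (lt_of_lt_of_le hdegr h)]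
    refine ⟨f /ₘ ((X : Polynomial F) ^ n - 1), ?_⟩
    conv_lhs => rw [← hfr, hr0, zero_add]
  -- reduction mod X^n - 1
  have h6 : ∀ j : ℕ, e (X ^ j * cp) = e (X ^ (j % n) * cp) := by
    intro j
    have hdvd : ((X : Polynomial F) ^ n - 1) ∣ (X ^ j - X ^ (j % n)) := by
      obtain ⟨t, ht⟩ : ((X : Polynomial F) ^ n - 1) ∣ ((X : Polynomial F) ^ n) ^ (j / n) - 1 := by
        simpa using sub_dvd_pow_sub_pow ((X : Polynomial F) ^ n) 1 (j / n)
      refine ⟨t * X ^ (j % n), ?_⟩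
      have hj : (X : Polynomial F) ^ j = ((X : Polynomial F) ^ n) ^ (j / n) * X ^ (j % n) := by
        rw [← pow_mul, ← pow_add, Nat.div_add_mod]
      rw [hj]
      linear_combination (X : Polynomial F) ^ (j % n) * ht
    obtain ⟨t, ht⟩ := hdvd
    have : e (X ^ j * cp) - e (X ^ (j % n) * cp) = 0 := by
      rw [← map_sub, ← sub_mul, ht, mul_assoc, h4]
    exact sub_eq_zero.mp this
  constructor
  · rintro ⟨-, hspan⟩
    have hη1 : η ∈ Submodule.span F (Set.range fun i : Fin n => γ ^ q ^ (i : ℕ)) := by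
      rw [hspan]; trivial
    obtain ⟨a, ha⟩ := (Submodule.mem_span_range_iff_exists_fun F).mp hη1
    set u : Polynomial F := ∑ i : Fin n, C (a i) * X ^ (i : ℕ) with hu
    have hua : e (u * cp) = η := by
      rw [hu, Finset.sum_mul, map_sum, ← ha]
      refine Finset.sum_congr rfl fun i _ => ?_
      rw [mul_assoc, show (C (a i) : Polynomial F) * (X ^ (i : ℕ) * cp) = a i • (X ^ (i:ℕ) * cp) by
        rw [smul_eq_C_mul], map_smul, h3, h2]
    have : e (u * cp - 1) = 0 := by
      rw [map_sub, hua, he, map_one, Module.End.one_apply, sub_self]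
    obtain ⟨v, hv⟩ := hker _ this
    refine ⟨u, -v, ?_⟩
    have h8 : u * cp - 1 = ((X : Polynomial F) ^ n - 1) * v := hv
    linear_combination h8
  · intro hcop
    obtain ⟨u, v, huv⟩ := hcop
    -- every e (f * cp) is in the span of the conjugates of γ
    set B : Fin n → K := fun i => γ ^ q ^ (i : ℕ) with hB
    have hBe : ∀ i : Fin n, B i = e (X ^ (i : ℕ) * cp) := by
      intro i; rw [hB, h3, h2]
    have hmem : ∀ f : Polynomial F, e (f * cp) ∈ Submodule.span F (Set.range B) := by
      intro f
      induction f using Polynomial.induction_on' with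
      | add g h hg hh => rw [add_mul, map_add]; exact Submodule.add_mem _ hg hh
      | monomial j a =>
        have : (monomial j a : Polynomial F) * cp = a • (X ^ j * cp) := by
          rw [smul_eq_C_mul, ← mul_assoc, ← C_mul_X_pow_eq_monomial]
        rw [this, map_smul, h6]
        refine Submodule.smul_mem _ _ (Submodule.subset_span ?_)
        exact ⟨⟨j % n, Nat.mod_lt _ hn0⟩, hBe ⟨j % n, Nat.mod_lt _ hn0⟩⟩
    have hspan : Submodule.span F (Set.range B) = ⊤ := by
      rw [eq_top_iff, ← hη.2, Submodule.span_le]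
      rintro x ⟨i, rfl⟩
      have key : η ^ q ^ (i : ℕ) = e ((X ^ (i : ℕ) * u) * cp) := by
        have h7 : e (X ^ (i : ℕ) * (u * cp)) +
            e (((X : Polynomial F) ^ n - 1) * (X ^ (i : ℕ) * v)) = e (X ^ (i : ℕ)) := by
          rw [← map_add]
          congr 1
          linear_combination (X : Polynomial F) ^ (i : ℕ) * huv
        rw [h4, add_zero] at h7
        rw [mul_assoc, h7, h1]
      show η ^ q ^ (i : ℕ) ∈ (Submodule.span F (Set.range B) : Set K)
      rw [key]
      exact hmem _
    refine ⟨?_, hspan⟩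
    apply linearIndependent_of_top_le_span_of_card_eq_finrank (by rw [hspan])
    simp [hn]
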